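/- arXiv:1807.11030 — 3 statements merged into one kernel-verified Lean document; each statement's English description precedes it below -/
import Mathlib

section
/- For an ideal $I$ of $R$ the following are equivalent: (i) for every finite subset $F$ of $I$ and every $b \in R$, $h_Y(F) \subseteq h_Y(b)$ implies $b \in I$ (i.e. $I$ is a strong $\mathcal{H}_Y$-ideal); (ii) for every finite subset $F$ of $I$, $k(h_Y(F)) \subseteq I$; (iii) for every finite subset $F$ of $I$ and every subset $S$ of $R$, $k(h_Y(S)) \subseteq k(h_Y(F))$ implies $S \subseteq I$; (iv) for all finite subsets $F$ of $I$ and finite subsets $G$ of $R$, $h_Y(F) \subseteq h_Y(G)$ implies $G \subseteq I$. -/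
/-- `hSet Y S` is the set of primes (ideals) in `Y` containing the subset `S`. -/
def hSet {R : Type*} [CommRing R] (Y : Set (Ideal R)) (S : Set R) : Set (Ideal R) :=
  {P ∈ Y | S ⊆ (P : Set R)}

/-- `kSet 𝒮` is the intersection of the ideals in `𝒮` (the whole ring if `𝒮 = ∅`). -/
def kSet {R : Type*} [CommRing R] (𝒮 : Set (Ideal R)) : Ideal R := sInf 𝒮

/-- An `ℋ_Y`-ideal. -/
def IsHIdeal {R : Type*} [CommRing R] (Y : Set (Ideal R)) (I : Ideal R) : Prop :=
  ∀ a ∈ I, ∀ b : R, hSet Y {a} ⊆ hSet Y {b} → b ∈ I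

/-- A strong `ℋ_Y`-ideal. -/
def IsStrongHIdeal {R : Type*} [CommRing R] (Y : Set (Ideal R)) (I : Ideal R) : Prop :=
  ∀ F : Set R, F.Finite → F ⊆ (I : Set R) → ∀ b : R, hSet Y F ⊆ hSet Y {b} → b ∈ I

/-- A `Y`-Hilbert ideal. -/
def IsYHilbert {R : Type*} [CommRing R] (Y : Set (Ideal R)) (I : Ideal R) : Prop :=
  I = kSet (hSet Y (I : Set R))

lemma mem_kSet_hSet {R : Type*} [CommRing R] {Y : Set (Ideal R)} {S : Set R} {b : R} :
    b ∈ kSet (hSet Y S) ↔ hSet Y S ⊆ hSet Y {b} := by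
  constructor
  · intro hb P hP
    exact ⟨hP.1, Set.singleton_subset_iff.2 (Ideal.mem_sInf.1 hb hP)⟩
  · intro h
    exact Ideal.mem_sInf.2 fun {P} hP => Set.singleton_subset_iff.1 (h hP).2

lemma subset_kSet_hSet {R : Type*} [CommRing R] {Y : Set (Ideal R)} (S : Set R) :
    S ⊆ (kSet (hSet Y S) : Set R) := fun a ha =>
  Ideal.mem_sInf.2 fun {P} hP => hP.2 ha

/-- equivalent characterizations of strong `ℋ_Y`-ideals. -/
theorem stmt2 {R : Type*} [CommRing R] (Y : Set (Ideal R))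
    (hprime : ∀ P ∈ Y, P.IsPrime) (I : Ideal R) :
    [ (∀ F : Set R, F.Finite → F ⊆ (I : Set R) →
        ∀ b : R, hSet Y F ⊆ hSet Y {b} → b ∈ I),
      (∀ F : Set R, F.Finite → F ⊆ (I : Set R) → kSet (hSet Y F) ≤ I),
      (∀ F : Set R, F.Finite → F ⊆ (I : Set R) →
        ∀ S : Set R, kSet (hSet Y S) ≤ kSet (hSet Y F) → S ⊆ (I : Set R)),
      (∀ F : Set R, F.Finite → F ⊆ (I : Set R) →
        ∀ G : Set R, G.Finite → hSet Y F ⊆ hSet Y G → G ⊆ (I : Set R)) ].TFAE := by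
  tfae_have 1 → 2 := by
    intro h F hF hFI b hb
    exact h F hF hFI b (mem_kSet_hSet.1 hb)
  tfae_have 2 → 3 := by
    intro h F hF hFI S hS a ha
    exact h F hF hFI (hS (subset_kSet_hSet S ha))
  tfae_have 3 → 4 := by
    intro h F hF hFI G _ hFG
    exact h F hF hFI G (sInf_le_sInf hFG)
  tfae_have 4 → 1 := by
    intro h F hF hFI b hb
    exact h F hF hFI {b} (Set.finite_singleton b) hb rfl
  tfae_finish
end

section
/- For ideals $I$ and $J$ of $R$, $(IJ)_{S\mathcal{H}} = I_{S\mathcal{H}} \cap J_{S\mathcal{H}} = (I \cap J)_{S\mathcal{H}}$, where $K_{S\mathcal{H}}$ denotes the smallest strong $\mathcal{H}_Y$-ideal containing the ideal $K$; the analogous equalities $(IJ)_{\mathcal{H}} = I_{\mathcal{H}} \cap J_{\mathcal{H}} = (I \cap J)_{\mathcal{H}}$ hold, where $K_{\mathcal{H}}$ denotes the smallest $\mathcal{H}_Y$-ideal containing $K$. -/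
/-- The smallest strong `ℋ_Y`-ideal containing `K`. -/
def strongHClosure {R : Type*} [CommRing R] (Y : Set (Ideal R)) (K : Ideal R) :
    Ideal R :=
  sInf {J : Ideal R | IsStrongHIdeal Y J ∧ K ≤ J}

/-- The smallest `ℋ_Y`-ideal containing `K`. -/
def hClosure {R : Type*} [CommRing R] (Y : Set (Ideal R)) (K : Ideal R) : Ideal R :=
  sInf {J : Ideal R | IsHIdeal Y J ∧ K ≤ J}

section
variable {R : Type*} [CommRing R] (Y : Set (Ideal R))

lemma mem_hSet_singleton {P : Ideal R} {a : R} :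
    P ∈ hSet Y {a} ↔ P ∈ Y ∧ a ∈ P := by
  simp [hSet, Set.singleton_subset_iff, SetLike.mem_coe]

lemma colonH (hprime : ∀ P ∈ Y, P.IsPrime) {L : Ideal R} (hL : IsHIdeal Y L)
    (N : Ideal R) : IsHIdeal Y (L.colon N) := by
  intro x hx b hb
  rw [Submodule.mem_colon] at hx ⊢
  intro p hp
  refine hL (x * p) (by simpa using hx p hp) (b * p) ?_
  intro P hP
  rcases (mem_hSet_singleton Y).1 hP with ⟨hPY, hxp⟩
  rcases (hprime P hPY).mul_mem_iff_mem_or_mem.1 hxp with h | h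
  · have := (mem_hSet_singleton Y).1 (hb ((mem_hSet_singleton Y).2 ⟨hPY, h⟩))
    exact (mem_hSet_singleton Y).2 ⟨hPY, by simpa using P.mul_mem_right p this.2⟩
  · exact (mem_hSet_singleton Y).2 ⟨hPY, P.mul_mem_left b h⟩

lemma colonSH (hprime : ∀ P ∈ Y, P.IsPrime) {L : Ideal R} (hL : IsStrongHIdeal Y L)
    (N : Ideal R) : IsStrongHIdeal Y (L.colon N) := by
  intro F hF hFsub b hb
  rw [Submodule.mem_colon]
  intro p hp
  refine hL ((fun x => x * p) '' F) (hF.image _) ?_ (b * p) ?_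
  · rintro _ ⟨x, hx, rfl⟩
    simpa using (Submodule.mem_colon.1 (hFsub hx)) p hp
  · intro P hP
    obtain ⟨hPY, hFP⟩ := hP
    by_cases hpP : p ∈ P
    · exact (mem_hSet_singleton Y).2 ⟨hPY, P.mul_mem_left b hpP⟩
    · have hFinP : F ⊆ (P : Set R) := by
        intro x hx
        have : x * p ∈ P := hFP ⟨x, hx, rfl⟩
        rcases (hprime P hPY).mul_mem_iff_mem_or_mem.1 this with h | h
        · exact h
        · exact absurd h hpP
      have := (mem_hSet_singleton Y).1 (hb ⟨hPY, hFinP⟩)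
      exact (mem_hSet_singleton Y).2 ⟨hPY, P.mul_mem_right p this.2⟩

lemma hSet_sq {b : R} (hprime : ∀ P ∈ Y, P.IsPrime) :
    hSet Y {b * b} ⊆ hSet Y ({b} : Set R) := by
  intro P hP
  rcases (mem_hSet_singleton Y).1 hP with ⟨hPY, hb2⟩
  rcases (hprime P hPY).mul_mem_iff_mem_or_mem.1 hb2 with h | h <;>
    exact (mem_hSet_singleton Y).2 ⟨hPY, h⟩

lemma hClosure_mono {K K' : Ideal R} (h : K ≤ K') : hClosure Y K ≤ hClosure Y K' :=
  sInf_le_sInf fun L hL => ⟨hL.1, h.trans hL.2⟩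

lemma strongHClosure_mono {K K' : Ideal R} (h : K ≤ K') :
    strongHClosure Y K ≤ strongHClosure Y K' :=
  sInf_le_sInf fun L hL => ⟨hL.1, h.trans hL.2⟩

lemma keyH (hprime : ∀ P ∈ Y, P.IsPrime) {I J L : Ideal R} (hL : IsHIdeal Y L)
    (hle : I * J ≤ L) : hClosure Y I ⊓ hClosure Y J ≤ L := by
  have h1 : hClosure Y I ≤ L.colon J := by
    refine sInf_le ⟨colonH Y hprime hL J, fun x hx => ?_⟩
    exact Submodule.mem_colon.2 fun p hp => hle (Ideal.mul_mem_mul hx hp)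
  have h2 : hClosure Y J ≤ L.colon (hClosure Y I) := by
    refine sInf_le ⟨colonH Y hprime hL _, fun j hj => ?_⟩
    refine Submodule.mem_colon.2 fun x hx => ?_
    have := Submodule.mem_colon.1 (h1 hx) j hj
    simpa [mul_comm] using this
  intro b hb
  have hbb : b * b ∈ L := by
    have := Submodule.mem_colon.1 (h2 hb.2) b hb.1
    simpa using this
  exact hL (b * b) hbb b (hSet_sq Y hprime)

lemma keySH (hprime : ∀ P ∈ Y, P.IsPrime) {I J L : Ideal R} (hL : IsStrongHIdeal Y L)
    (hle : I * J ≤ L) : strongHClosure Y I ⊓ strongHClosure Y J ≤ L := by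
  have h1 : strongHClosure Y I ≤ L.colon J := by
    refine sInf_le ⟨colonSH Y hprime hL J, fun x hx => ?_⟩
    exact Submodule.mem_colon.2 fun p hp => hle (Ideal.mul_mem_mul hx hp)
  have h2 : strongHClosure Y J ≤ L.colon (strongHClosure Y I) := by
    refine sInf_le ⟨colonSH Y hprime hL _, fun j hj => ?_⟩
    refine Submodule.mem_colon.2 fun x hx => ?_
    have := Submodule.mem_colon.1 (h1 hx) j hj
    simpa [mul_comm] using this
  intro b hb
  have hbb : b * b ∈ L := by
    have := Submodule.mem_colon.1 (h2 hb.2) b hb.1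
    simpa using this
  refine hL {b * b} (Set.finite_singleton _) ?_ b (hSet_sq Y hprime)
  simpa using hbb

end

/-- `(IJ)_{Sℋ} = I_{Sℋ} ∩ J_{Sℋ} = (I ∩ J)_{Sℋ}` and likewise
`(IJ)_ℋ = I_ℋ ∩ J_ℋ = (I ∩ J)_ℋ`. -/
theorem stmt11 {R : Type*} [CommRing R] (Y : Set (Ideal R))
    (hprime : ∀ P ∈ Y, P.IsPrime) (I J : Ideal R) :
    strongHClosure Y (I * J) = strongHClosure Y I ⊓ strongHClosure Y J ∧
    strongHClosure Y I ⊓ strongHClosure Y J = strongHClosure Y (I ⊓ J) ∧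
    hClosure Y (I * J) = hClosure Y I ⊓ hClosure Y J ∧
    hClosure Y I ⊓ hClosure Y J = hClosure Y (I ⊓ J) := by
  have sh1 : strongHClosure Y (I * J) = strongHClosure Y I ⊓ strongHClosure Y J := by
    refine le_antisymm (le_inf (strongHClosure_mono Y Ideal.mul_le_left)
      (strongHClosure_mono Y Ideal.mul_le_right)) ?_
    exact le_sInf fun L hL => keySH Y hprime hL.1 hL.2
  have sh2 : strongHClosure Y I ⊓ strongHClosure Y J = strongHClosure Y (I ⊓ J) := by
    refine le_antisymm ?_ (le_inf (strongHClosure_mono Y inf_le_left)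
      (strongHClosure_mono Y inf_le_right))
    rw [← sh1]
    exact strongHClosure_mono Y Ideal.mul_le_inf
  have h1 : hClosure Y (I * J) = hClosure Y I ⊓ hClosure Y J := by
    refine le_antisymm (le_inf (hClosure_mono Y Ideal.mul_le_left)
      (hClosure_mono Y Ideal.mul_le_right)) ?_
    exact le_sInf fun L hL => keyH Y hprime hL.1 hL.2
  have h2 : hClosure Y I ⊓ hClosure Y J = hClosure Y (I ⊓ J) := by
    refine le_antisymm ?_ (le_inf (hClosure_mono Y inf_le_left)
      (hClosure_mono Y inf_le_right))
    rw [← h1]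
    exact hClosure_mono Y Ideal.mul_le_inf
  exact ⟨sh1, sh2, h1, h2⟩
end

section
/- Let $P$ be a prime ideal of $R$ with $k(Y) \subseteq P$. Then the set of $\mathcal{H}_Y$-ideals contained in $P$ has maximal elements (with respect to inclusion), and every such maximal element is a prime ideal; the same holds for the set of strong $\mathcal{H}_Y$-ideals contained in $P$. Consequently, if $k(Y) = \langle 0 \rangle$, then every prime ideal of $R$ is either an $\mathcal{H}_Y$-ideal itself or contains a maximal $\mathcal{H}_Y$-ideal that is a prime $\mathcal{H}_Y$-ideal (and similarly in the strong case). -/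
section Aux

variable {R : Type*} [CommRing R] {Y : Set (Ideal R)}

lemma strongH_to_H {I : Ideal R} (h : IsStrongHIdeal Y I) : IsHIdeal Y I := by
  intro a ha b hb
  exact h {a} (Set.finite_singleton a) (Set.singleton_subset_iff.2 ha) b hb

lemma kSet_isStrongH : IsStrongHIdeal Y (kSet Y) := by
  intro F _ hF b hb
  rw [kSet, Ideal.mem_sInf]
  intro P hP
  have hPF : P ∈ hSet Y F := ⟨hP, hF.trans fun x hx => (Ideal.mem_sInf.1 hx) hP⟩
  exact Set.singleton_subset_iff.1 (hb hPF).2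

lemma kSet_isH : IsHIdeal Y (kSet Y) := strongH_to_H kSet_isStrongH

/-- For a minimal prime `Q` over `I` and `a ∈ Q`, there are `s ∉ Q`, `n` with
`s * a ^ n ∈ I`. -/
lemma exists_mul_pow_mem {I Q : Ideal R} (hQ : Q ∈ I.minimalPrimes) {a : R}
    (ha : a ∈ Q) : ∃ s ∉ Q, ∃ n : ℕ, s * a ^ n ∈ I := by
  have hQp : Q.IsPrime := hQ.1.1
  by_contra h
  push_neg at h
  set S : Submonoid R :=
    { carrier := {x | ∃ s ∉ Q, ∃ n : ℕ, x = s * a ^ n}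
      one_mem' := ⟨1, (Ideal.ne_top_iff_one Q).1 hQp.ne_top, 0, by ring⟩
      mul_mem' := by
        rintro x y ⟨s, hs, n, rfl⟩ ⟨t, ht, m, rfl⟩
        refine ⟨s * t, fun hst => ?_, n + m, by ring⟩
        rcases hQp.mem_or_mem hst with h' | h' <;> [exact hs h'; exact ht h'] } with hS
  have hdisj : Disjoint (I : Set R) (S : Set R) := by
    rw [Set.disjoint_left]
    rintro x hx ⟨s, hs, n, rfl⟩
    exact h s hs n hx
  obtain ⟨p, hp, hIp, hpd⟩ := Ideal.exists_le_prime_disjoint I S hdisj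
  have hpQ : p ≤ Q := by
    intro x hxp
    by_contra hxQ
    exact Set.disjoint_left.1 hpd hxp ⟨x, hxQ, 0, by ring⟩
  have hap : a ∉ p := fun hap =>
    Set.disjoint_left.1 hpd hap ⟨1, (Ideal.ne_top_iff_one Q).1 hQp.ne_top, 1, by ring⟩
  exact hap (hQ.2 ⟨hp, hIp⟩ hpQ ha)

lemma minimalPrime_isH (hprime : ∀ P ∈ Y, P.IsPrime) {I Q : Ideal R}
    (hI : IsHIdeal Y I) (hQ : Q ∈ I.minimalPrimes) : IsHIdeal Y Q := by
  have hQp : Q.IsPrime := hQ.1.1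
  intro a ha b hb
  obtain ⟨s, hs, n, hsn⟩ := exists_mul_pow_mem hQ ha
  have key : s * b ∈ I := by
    refine hI _ hsn (s * b) ?_
    rintro P ⟨hPY, hPm⟩
    have hPp := hprime P hPY
    refine ⟨hPY, Set.singleton_subset_iff.2 ?_⟩
    have hsaP : s * a ^ n ∈ P := Set.singleton_subset_iff.1 hPm
    rcases hPp.mem_or_mem hsaP with h' | h'
    · exact P.mul_mem_right b h'
    · have haP : a ∈ P := hPp.mem_of_pow_mem n h'
      have hbP : b ∈ P :=
        Set.singleton_subset_iff.1 (hb ⟨hPY, Set.singleton_subset_iff.2 haP⟩).2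
      exact P.mul_mem_left s hbP
  rcases hQp.mem_or_mem (hQ.1.2 key) with h' | h'
  · exact absurd h' hs
  · exact h'

lemma minimalPrime_isStrongH (hprime : ∀ P ∈ Y, P.IsPrime) {I Q : Ideal R}
    (hI : IsStrongHIdeal Y I) (hQ : Q ∈ I.minimalPrimes) : IsStrongHIdeal Y Q := by
  have hQp : Q.IsPrime := hQ.1.1
  intro F hF hFQ b hb
  -- choose witnesses for each element of F
  have hw : ∀ a : F, ∃ s ∉ Q, ∃ n : ℕ, s * (a : R) ^ n ∈ I := fun a =>
    exists_mul_pow_mem hQ (hFQ a.2)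
  choose sw hswQ nw hmem using hw
  haveI : Fintype F := hF.fintype
  set s : R := ∏ a : F, sw a with hsdef
  have hsQ : s ∉ Q := by
    intro hsQ
    obtain ⟨a, -, haQ⟩ := (Ideal.IsPrime.prod_mem_iff (hp := hQp)).1 hsQ
    exact hswQ a haQ
  set G : Set R := Set.range (fun a : F => sw a * (a : R) ^ nw a) with hGdef
  have hGfin : G.Finite := Set.finite_range _
  have hGI : G ⊆ (I : Set R) := by
    rintro x ⟨a, rfl⟩
    exact hmem a
  have key : s * b ∈ I := by
    refine hI G hGfin hGI (s * b) ?_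
    rintro P ⟨hPY, hPG⟩
    have hPp := hprime P hPY
    refine ⟨hPY, Set.singleton_subset_iff.2 ?_⟩
    by_cases hcase : ∃ a : F, sw a ∈ P
    · obtain ⟨a, haP⟩ := hcase
      have : s ∈ P := Ideal.mem_of_dvd _ (Finset.dvd_prod_of_mem _ (Finset.mem_univ a)) haP
      exact P.mul_mem_right b this
    · push_neg at hcase
      have hFP : F ⊆ (P : Set R) := by
        intro a haF
        have hGa : sw ⟨a, haF⟩ * a ^ nw ⟨a, haF⟩ ∈ P := hPG ⟨⟨a, haF⟩, rfl⟩
        rcases hPp.mem_or_mem hGa with h' | h'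
        · exact absurd h' (hcase _)
        · exact hPp.mem_of_pow_mem _ h'
      have hbP : b ∈ P := Set.singleton_subset_iff.1 (hb ⟨hPY, hFP⟩).2
      exact P.mul_mem_left s hbP
  rcases hQp.mem_or_mem (hQ.1.2 key) with h' | h'
  · exact absurd h' hsQ
  · exact h'

lemma chain_union_mem {c : Set (Ideal R)} (hc : IsChain (· ≤ ·) c)
    (hne : c.Nonempty) {F : Set R} (hF : F.Finite) (hFc : F ⊆ ((sSup c : Ideal R) : Set R)) :
    ∃ I ∈ c, F ⊆ (I : Set R) := by
  haveI : Nonempty c := hne.to_subtype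
  revert hFc
  refine Set.Finite.induction_on (motive := fun F _ =>
    F ⊆ ((sSup c : Ideal R) : Set R) → ∃ I ∈ c, F ⊆ (I : Set R)) F hF ?_ ?_
  · intro _
    obtain ⟨I, hI⟩ := hne
    exact ⟨I, hI, Set.empty_subset _⟩
  · intro a F haF hFfin ih hFc
    obtain ⟨I, hIc, hFI⟩ := ih ((Set.subset_insert a F).trans hFc)
    have haSup : a ∈ sSup c := hFc (Set.mem_insert a F)
    rw [sSup_eq_iSup' c] at haSup
    obtain ⟨⟨J, hJc⟩, haJ⟩ := (Submodule.mem_iSup_of_directed _ hc.directed).1 haSup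
    obtain ⟨K, hKc, hIK, hJK⟩ := hc.directedOn I hIc J hJc
    exact ⟨K, hKc, Set.insert_subset (hJK haJ) (hFI.trans hIK)⟩

lemma exists_maximal_H (hprime : ∀ P ∈ Y, P.IsPrime) {P : Ideal R} (hkP : kSet Y ≤ P) :
    ∃ M : Ideal R, IsHIdeal Y M ∧ M ≤ P ∧
      ∀ J : Ideal R, IsHIdeal Y J → J ≤ P → M ≤ J → J = M := by
  have hchain : ∀ c ⊆ {I : Ideal R | IsHIdeal Y I ∧ I ≤ P}, IsChain (· ≤ ·) c →
      ∀ y ∈ c, ∃ ub ∈ {I : Ideal R | IsHIdeal Y I ∧ I ≤ P}, ∀ z ∈ c, z ≤ ub := by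
    intro c hcs hc y hy
    refine ⟨sSup c, ⟨?_, sSup_le fun I hI => (hcs hI).2⟩, fun z hz => le_sSup hz⟩
    intro a ha b hb
    obtain ⟨I, hIc, haI⟩ := chain_union_mem hc ⟨y, hy⟩ (Set.finite_singleton a)
      (Set.singleton_subset_iff.2 ha)
    exact le_sSup hIc ((hcs hIc).1 a (haI rfl) b hb)
  obtain ⟨M, hkM, hM⟩ := zorn_le_nonempty₀ {I : Ideal R | IsHIdeal Y I ∧ I ≤ P}
    hchain (kSet Y) ⟨kSet_isH, hkP⟩
  exact ⟨M, hM.1.1, hM.1.2, fun J hJ hJP hMJ => le_antisymm (hM.2 ⟨hJ, hJP⟩ hMJ) hMJ⟩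

lemma exists_maximal_strongH (hprime : ∀ P ∈ Y, P.IsPrime) {P : Ideal R}
    (hkP : kSet Y ≤ P) :
    ∃ M : Ideal R, IsStrongHIdeal Y M ∧ M ≤ P ∧
      ∀ J : Ideal R, IsStrongHIdeal Y J → J ≤ P → M ≤ J → J = M := by
  have hchain : ∀ c ⊆ {I : Ideal R | IsStrongHIdeal Y I ∧ I ≤ P}, IsChain (· ≤ ·) c →
      ∀ y ∈ c, ∃ ub ∈ {I : Ideal R | IsStrongHIdeal Y I ∧ I ≤ P}, ∀ z ∈ c, z ≤ ub := by
    intro c hcs hc y hy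
    refine ⟨sSup c, ⟨?_, sSup_le fun I hI => (hcs hI).2⟩, fun z hz => le_sSup hz⟩
    intro F hF hFc b hb
    obtain ⟨I, hIc, hFI⟩ := chain_union_mem hc ⟨y, hy⟩ hF hFc
    exact le_sSup hIc ((hcs hIc).1 F hF hFI b hb)
  obtain ⟨M, hkM, hM⟩ := zorn_le_nonempty₀ {I : Ideal R | IsStrongHIdeal Y I ∧ I ≤ P}
    hchain (kSet Y) ⟨kSet_isStrongH, hkP⟩
  exact ⟨M, hM.1.1, hM.1.2, fun J hJ hJP hMJ => le_antisymm (hM.2 ⟨hJ, hJP⟩ hMJ) hMJ⟩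

lemma maximal_H_isPrime (hprime : ∀ P ∈ Y, P.IsPrime) {P M : Ideal R}
    (hP : P.IsPrime) (hM : IsHIdeal Y M) (hMP : M ≤ P)
    (hmax : ∀ J : Ideal R, IsHIdeal Y J → J ≤ P → M ≤ J → J = M) : M.IsPrime := by
  haveI := hP
  obtain ⟨Q, hQmin, hQP⟩ := Ideal.exists_minimalPrimes_le (I := M) hMP
  have hQH := minimalPrime_isH hprime hM hQmin
  have := hmax Q hQH hQP hQmin.1.2
  rw [← this]
  exact hQmin.1.1

lemma maximal_strongH_isPrime (hprime : ∀ P ∈ Y, P.IsPrime) {P M : Ideal R}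
    (hP : P.IsPrime) (hM : IsStrongHIdeal Y M) (hMP : M ≤ P)
    (hmax : ∀ J : Ideal R, IsStrongHIdeal Y J → J ≤ P → M ≤ J → J = M) :
    M.IsPrime := by
  haveI := hP
  obtain ⟨Q, hQmin, hQP⟩ := Ideal.exists_minimalPrimes_le (I := M) hMP
  have hQH := minimalPrime_isStrongH hprime hM hQmin
  have := hmax Q hQH hQP hQmin.1.2
  rw [← this]
  exact hQmin.1.1

end Aux

/-- for a prime `P ⊇ k(Y)`, the set of (strong) `ℋ_Y`-ideals
contained in `P` has maximal elements, and every such maximal element is prime;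
consequently, if `k(Y) = ⟨0⟩`, every prime ideal is either a (strong) `ℋ_Y`-ideal
or contains a maximal (strong) `ℋ_Y`-ideal which is a prime (strong)
`ℋ_Y`-ideal. -/

theorem stmt19 {R : Type*} [CommRing R] (Y : Set (Ideal R))
    (hprime : ∀ P ∈ Y, P.IsPrime) :
    (∀ P : Ideal R, P.IsPrime → kSet Y ≤ P →
      (∃ M : Ideal R, IsHIdeal Y M ∧ M ≤ P ∧
        ∀ J : Ideal R, IsHIdeal Y J → J ≤ P → M ≤ J → J = M) ∧
      (∀ M : Ideal R, IsHIdeal Y M → M ≤ P →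
        (∀ J : Ideal R, IsHIdeal Y J → J ≤ P → M ≤ J → J = M) → M.IsPrime) ∧
      (∃ M : Ideal R, IsStrongHIdeal Y M ∧ M ≤ P ∧
        ∀ J : Ideal R, IsStrongHIdeal Y J → J ≤ P → M ≤ J → J = M) ∧
      (∀ M : Ideal R, IsStrongHIdeal Y M → M ≤ P →
        (∀ J : Ideal R, IsStrongHIdeal Y J → J ≤ P → M ≤ J → J = M) →
        M.IsPrime)) ∧
    (kSet Y = ⊥ → ∀ Q : Ideal R, Q.IsPrime →
      (IsHIdeal Y Q ∨ ∃ M : Ideal R, M.IsPrime ∧ IsHIdeal Y M ∧ M ≤ Q ∧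
        ∀ J : Ideal R, IsHIdeal Y J → J ≤ Q → M ≤ J → J = M) ∧
      (IsStrongHIdeal Y Q ∨ ∃ M : Ideal R, M.IsPrime ∧ IsStrongHIdeal Y M ∧
        M ≤ Q ∧
        ∀ J : Ideal R, IsStrongHIdeal Y J → J ≤ Q → M ≤ J → J = M)) := by
  constructor
  · intro P hP hkP
    refine ⟨exists_maximal_H hprime hkP,
      fun M hM hMP hmax => maximal_H_isPrime hprime hP hM hMP hmax,
      exists_maximal_strongH hprime hkP,
      fun M hM hMP hmax => maximal_strongH_isPrime hprime hP hM hMP hmax⟩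
  · intro hk Q hQ
    have hkQ : kSet Y ≤ Q := hk ▸ bot_le
    constructor
    · obtain ⟨M, hMH, hMQ, hmax⟩ := exists_maximal_H hprime hkQ
      exact Or.inr ⟨M, maximal_H_isPrime hprime hQ hMH hMQ hmax, hMH, hMQ, hmax⟩
    · obtain ⟨M, hMH, hMQ, hmax⟩ := exists_maximal_strongH hprime hkQ
      exact Or.inr ⟨M, maximal_strongH_isPrime hprime hQ hMH hMQ hmax, hMH, hMQ, hmax⟩
end
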